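/- For all integers d ≥ 2 and α ≥ 2, the rank of the generalized symmetric group ℤ_d ≀ Sym_α is exactly 2. -/

import Mathlib

/-- A permutation of coordinates, as a multiplicative automorphism of
`(ℤ_d)^α` (written multiplicatively): `(w^π)_i = w_{π⁻¹(i)}`. -/
def permCoordAut (α : ℕ) (M : Type*) [Monoid M] (π : Equiv.Perm (Fin α)) :
    MulAut (Fin α → M) :=
  { Equiv.arrowCongr π (Equiv.refl M) with
    map_mul' := fun _ _ => rfl }

/-- The action of `Sym_α` on `(ℤ_d)^α` permuting the coordinates. -/
def wreathAct (d α : ℕ) : Equiv.Perm (Fin α) →* MulAut (Fin α → Multiplicative (ZMod d)) where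
  toFun := permCoordAut α (Multiplicative (ZMod d))
  map_one' := by ext v; rfl
  map_mul' := fun π ρ => by ext v; rfl

/-- The generalized symmetric group `ℤ_d ≀ Sym_α = (ℤ_d)^α ⋊ Sym_α`, where
`Sym_α` acts by permuting coordinates. -/
abbrev GenSym (d α : ℕ) :=
  SemidirectProduct (Fin α → Multiplicative (ZMod d)) (Equiv.Perm (Fin α)) (wreathAct d α)

/-- The rank of a group: the least cardinality of a generating subset. -/
noncomputable def grank (G : Type*) [Group G] : ℕ :=
  sInf {k : ℕ | ∃ H : Finset G, H.card = k ∧ Subgroup.closure (H : Set G) = ⊤}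

open Equiv SemidirectProduct Multiplicative

lemma wreathAct_apply (d α : ℕ) (π : Equiv.Perm (Fin α))
    (v : Fin α → Multiplicative (ZMod d)) (i : Fin α) :
    wreathAct d α π v i = v (π⁻¹ i) := rfl

def gvec (d α : ℕ) [NeZero α] : Fin α → Multiplicative (ZMod d) :=
  Pi.mulSingle 0 (ofAdd (1 : ZMod d))

@[simp] lemma gvec_apply_zero (d α : ℕ) [NeZero α] : gvec d α 0 = ofAdd (1 : ZMod d) := by
  simp [gvec]

lemma gvec_apply_ne (d α : ℕ) [NeZero α] {i : Fin α} (h : i ≠ 0) : gvec d α i = 1 := by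
  simp [gvec, Pi.mulSingle_eq_of_ne h]

def sGen (d α : ℕ) [NeZero α] : GenSym d α := ⟨gvec d α, finRotate α⟩

def tGen (d α : ℕ) [NeZero α] : GenSym d α := inr (Equiv.swap 0 1)

@[simp] lemma sGen_left (d α : ℕ) [NeZero α] : (sGen d α).left = gvec d α := rfl
@[simp] lemma sGen_right (d α : ℕ) [NeZero α] : (sGen d α).right = finRotate α := rfl

lemma conj_inr (d α : ℕ) [NeZero α] (σ : Equiv.Perm (Fin α))
    (h : (finRotate α * σ * (finRotate α)⁻¹) 0 = 0) :
    sGen d α * inr σ * (sGen d α)⁻¹ = inr (finRotate α * σ * (finRotate α)⁻¹) := by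
  apply SemidirectProduct.ext
  · show (gvec d α * wreathAct d α (finRotate α) 1) *
      wreathAct d α (finRotate α * σ) (wreathAct d α (finRotate α)⁻¹ (gvec d α)⁻¹) = 1
    rw [map_one, mul_one, ← MulAut.mul_apply, ← map_mul]
    set ρ := finRotate α * σ * (finRotate α)⁻¹ with hρ
    funext i
    rw [Pi.mul_apply, wreathAct_apply, Pi.inv_apply]
    rcases eq_or_ne i 0 with rfl | hi
    · have h0 : ρ⁻¹ (0 : Fin α) = 0 := Equiv.Perm.inv_eq_iff_eq.mpr h.symm
      rw [h0]; simp
    · have h0 : ρ⁻¹ i ≠ 0 := by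
        intro hcon
        apply hi
        have h2 := congrArg ρ hcon
        rw [← Equiv.Perm.mul_apply, mul_inv_cancel, Equiv.Perm.one_apply, h] at h2; exact h2
      rw [gvec_apply_ne d α hi, gvec_apply_ne d α h0, inv_one, mul_one]
      rfl
  · show finRotate α * σ * (finRotate α)⁻¹ = finRotate α * σ * (finRotate α)⁻¹
    rfl

theorem closure_st (d m : ℕ) [NeZero d] :
    Subgroup.closure {sGen d (m + 2), tGen d (m + 2)} = ⊤ := by
  set α := m + 2 with hα
  set K := Subgroup.closure {sGen d α, tGen d α} with hK
  have hs : sGen d α ∈ K := Subgroup.subset_closure (by simp)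
  have ht : tGen d α ∈ K := Subgroup.subset_closure (by simp)
  -- Step 1: all adjacent transpositions (as pure permutations) lie in K.
  have adj : ∀ i : ℕ, ∀ h1 : i + 1 < α,
      (inr (Equiv.swap ⟨i, by omega⟩ ⟨i + 1, h1⟩) : GenSym d α) ∈ K := by
    intro i
    induction i with
    | zero =>
      intro h1
      have h0 : (⟨0, by omega⟩ : Fin α) = 0 := rfl
      have h1' : (⟨1, h1⟩ : Fin α) = 1 := by
        apply Fin.ext; simp [Fin.val_one]; exact (Nat.mod_eq_of_lt (by omega)).symm
      rw [h0, h1']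
      exact ht
    | succ i ih =>
      intro h1
      have hi1 : i + 1 < α := by omega
      have prev := ih hi1
      have hconj := conj_inr d α (Equiv.swap ⟨i, by omega⟩ ⟨i + 1, hi1⟩) ?_
      · have hrw : finRotate α * Equiv.swap ⟨i, by omega⟩ ⟨i + 1, hi1⟩ * (finRotate α)⁻¹
            = Equiv.swap (⟨i + 1, hi1⟩ : Fin α) ⟨i + 2, by omega⟩ := by
          rw [← Equiv.swap_apply_apply]
          congr 1
          · apply Fin.ext
            rw [finRotate_succ_apply, Fin.val_add, Fin.val_one]
            exact Nat.mod_eq_of_lt hi1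
          · apply Fin.ext
            rw [finRotate_succ_apply, Fin.val_add, Fin.val_one]
            exact Nat.mod_eq_of_lt h1
        rw [hrw] at hconj
        rw [← hconj]
        exact mul_mem (mul_mem hs prev) (inv_mem hs)
      · rw [← Equiv.swap_apply_apply]
        apply Equiv.swap_apply_of_ne_of_ne
        · apply Fin.ne_of_val_ne
          rw [Fin.val_zero, finRotate_succ_apply, Fin.val_add, Fin.val_one,
            Nat.mod_eq_of_lt hi1]
          omega
        · apply Fin.ne_of_val_ne
          rw [Fin.val_zero, finRotate_succ_apply, Fin.val_add, Fin.val_one,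
            Nat.mod_eq_of_lt h1]
          omega
  -- Step 2: all transpositions lie in K.
  have step : ∀ k : ℕ, ∀ x y : Fin α, (y : ℕ) = (x : ℕ) + (k + 1) →
      (inr (Equiv.swap x y) : GenSym d α) ∈ K := by
    intro k
    induction k with
    | zero =>
      intro x y hxy
      have := adj (x : ℕ) (by omega)
      convert this using 3 <;> apply Fin.ext <;> simp [hxy]
    | succ k ih =>
      intro x y hxy
      have hz : (x : ℕ) + (k + 1) < α := by have := y.isLt; omega
      set z : Fin α := ⟨(x : ℕ) + (k + 1), hz⟩ with hzdef
      have h1 : (inr (Equiv.swap x z) : GenSym d α) ∈ K := ih x z rfl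
      have h2 : (inr (Equiv.swap z y) : GenSym d α) ∈ K := by
        have := adj (z : ℕ) (by simp [hzdef]; omega)
        convert this using 3 <;> apply Fin.ext <;> simp [hzdef, hxy] <;> omega
      have hxz : x ≠ z := by apply Fin.ne_of_val_ne; simp [hzdef]
      have hxy' : x ≠ y := by apply Fin.ne_of_val_ne; omega
      have heq : Equiv.swap x y
          = Equiv.swap z y * Equiv.swap x z * (Equiv.swap z y)⁻¹ := by
        rw [← Equiv.swap_apply_apply]
        congr 1
        · rw [Equiv.swap_apply_of_ne_of_ne hxz hxy']
        · rw [Equiv.swap_apply_left]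
      rw [heq, map_mul, map_mul, map_inv]
      exact mul_mem (mul_mem h2 h1) (inv_mem h2)
  have allswap : ∀ x y : Fin α, (inr (Equiv.swap x y) : GenSym d α) ∈ K := by
    intro x y
    rcases lt_trichotomy (x : ℕ) (y : ℕ) with hlt | heq | hgt
    · exact step ((y : ℕ) - (x : ℕ) - 1) x y (by omega)
    · have : x = y := Fin.ext heq
      rw [this, Equiv.swap_self]
      have : (Equiv.refl (Fin α)) = (1 : Equiv.Perm (Fin α)) := rfl
      rw [this, map_one]; exact one_mem K
    · rw [Equiv.swap_comm]
      exact step ((x : ℕ) - (y : ℕ) - 1) y x (by omega)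
  -- Step 3: all permutations lie in K.
  have allperm : ∀ π : Equiv.Perm (Fin α), (inr π : GenSym d α) ∈ K := by
    intro π
    refine Equiv.Perm.swap_induction_on π ?_ ?_
    · rw [map_one]; exact one_mem K
    · intro f x y _ hf
      rw [map_mul]
      exact mul_mem (allswap x y) hf
  -- Step 4: the basic vector lies in K.
  have hrot : (inl (gvec d α) : GenSym d α) ∈ K := by
    have hdecomp : sGen d α * (inr (finRotate α) : GenSym d α)⁻¹ = inl (gvec d α) := by
      apply SemidirectProduct.ext
      · show gvec d α * wreathAct d α (finRotate α)
            (wreathAct d α (finRotate α)⁻¹ (1 : Fin α → Multiplicative (ZMod d))⁻¹)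
          = gvec d α
        rw [inv_one, map_one, map_one, mul_one]
      · show finRotate α * (finRotate α)⁻¹ = 1
        simp
    rw [← hdecomp]
    exact mul_mem hs (inv_mem (allperm _))
  -- Step 5: all "single" vectors lie in K.
  have hsingle : ∀ (i : Fin α) (x : Multiplicative (ZMod d)),
      (inl (Pi.mulSingle i x) : GenSym d α) ∈ K := by
    intro i x
    have hone : (inl (Pi.mulSingle i (ofAdd (1 : ZMod d))) : GenSym d α) ∈ K := by
      have heq : wreathAct d α (Equiv.swap 0 i) (gvec d α)
          = Pi.mulSingle i (ofAdd (1 : ZMod d)) := by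
        funext j
        rw [wreathAct_apply]
        rcases eq_or_ne j i with rfl | hj
        · have : (Equiv.swap (0 : Fin α) j)⁻¹ j = 0 := by simp
          rw [this, gvec_apply_zero, Pi.mulSingle_eq_same]
        · rw [Pi.mulSingle_eq_of_ne hj]
          rcases eq_or_ne j 0 with rfl | hj0
          · have : (Equiv.swap (0 : Fin α) i)⁻¹ 0 = i := by simp
            rw [this, gvec_apply_ne d α (Ne.symm hj)]
          · have : (Equiv.swap (0 : Fin α) i)⁻¹ j = j := by
              simp [Equiv.swap_apply_of_ne_of_ne hj0 hj]
            rw [this, gvec_apply_ne d α hj0]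
      have haut := SemidirectProduct.inl_aut (φ := wreathAct d α) (Equiv.swap 0 i) (gvec d α)
      rw [heq] at haut
      rw [haut]
      exact mul_mem (mul_mem (allperm _) hrot) (allperm _)
    obtain ⟨k, hk⟩ : ∃ k : ℕ, (ofAdd (1 : ZMod d)) ^ k = x := by
      refine ⟨(toAdd x).val, ?_⟩
      rw [← ofAdd_nsmul, nsmul_eq_mul, mul_one, ZMod.natCast_zmod_val, ofAdd_toAdd]
    rw [← hk, Pi.mulSingle_pow, map_pow]
    exact pow_mem hone k
  -- Step 6: all base vectors lie in K.
  have hbase : ∀ v : Fin α → Multiplicative (ZMod d), (inl v : GenSym d α) ∈ K := by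
    intro v
    have hv : v ∈ K.comap (inl : _ →* GenSym d α) := by
      rw [← Finset.univ_prod_mulSingle v]
      exact Subgroup.prod_mem _ fun i _ => Subgroup.mem_comap.mpr (hsingle i (v i))
    exact Subgroup.mem_comap.mp hv
  rw [eq_top_iff]
  intro g _
  rw [← SemidirectProduct.inl_left_mul_inr_right g]
  exact mul_mem (hbase g.left) (allperm g.right)

/-- For all d ≥ 2 and α ≥ 2, the rank of the generalized symmetric group
ℤ_d ≀ Sym_α is exactly 2. -/
theorem rank_genSym (d α : ℕ) (hd : 2 ≤ d) (hα : 2 ≤ α) :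
    grank (GenSym d α) = 2 := by
  obtain ⟨m, rfl⟩ : ∃ m, α = m + 2 := ⟨α - 2, by omega⟩
  haveI : NeZero d := ⟨by omega⟩
  haveI : Fact (1 < d) := ⟨by omega⟩
  classical
  set G := GenSym d (m + 2) with hG
  set S := {k : ℕ | ∃ H : Finset G, H.card = k ∧ Subgroup.closure (H : Set G) = ⊤} with hS
  set s := sGen d (m + 2) with hs
  set t := tGen d (m + 2) with ht
  have hone_ne : (ofAdd (1 : ZMod d)) ≠ (1 : Multiplicative (ZMod d)) := by
    intro hcon
    exact one_ne_zero (α := ZMod d) (by simpa using congrArg toAdd hcon)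
  have hs_ne_one : s ≠ 1 := by
    intro hcon
    have h0 := congrFun (congrArg SemidirectProduct.left hcon) 0
    rw [show s.left = gvec d (m + 2) from rfl, gvec_apply_zero, one_left] at h0
    exact hone_ne (by simpa using h0)
  have hst : s ≠ t := by
    intro hcon
    have h0 := congrFun (congrArg SemidirectProduct.left hcon) 0
    rw [show s.left = gvec d (m + 2) from rfl, gvec_apply_zero,
      show t.left = (1 : Fin (m + 2) → Multiplicative (ZMod d)) from rfl] at h0
    exact hone_ne (by simpa using h0)
  have hcomm : s * t ≠ t * s := by
    intro hcon
    have h0 := congrFun (congrArg SemidirectProduct.left hcon) 0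
    have hlhs : (s * t).left 0 = ofAdd (1 : ZMod d) := by
      show (gvec d (m + 2) * wreathAct d (m + 2) (finRotate (m + 2))
        (1 : Fin (m + 2) → Multiplicative (ZMod d))) 0 = _
      rw [map_one, mul_one, gvec_apply_zero]
    have hrhs : (t * s).left 0 = 1 := by
      show ((1 : Fin (m + 2) → Multiplicative (ZMod d))
        * wreathAct d (m + 2) (Equiv.swap 0 1) (gvec d (m + 2))) 0 = _
      rw [one_mul, wreathAct_apply]
      have h01 : (Equiv.swap (0 : Fin (m + 2)) 1)⁻¹ 0 = 1 := by simp
      rw [h01]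
      exact gvec_apply_ne d (m + 2) (by
        apply Fin.ne_of_val_ne
        rw [Fin.val_one, Fin.val_zero]
        omega)
    rw [hlhs, hrhs] at h0
    exact hone_ne h0
  have h2 : 2 ∈ S := by
    refine ⟨{s, t}, ?_, ?_⟩
    · rw [Finset.card_insert_of_notMem (by simpa using hst), Finset.card_singleton]
    · have hco : (({s, t} : Finset G) : Set G) = {s, t} := by simp
      rw [hco]
      exact closure_st d m
  have hinf_mem : sInf S ∈ S := Nat.sInf_mem ⟨2, h2⟩
  have hle : sInf S ≤ 2 := Nat.sInf_le h2
  have hne0 : sInf S ≠ 0 := by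
    intro hcon
    rw [hcon] at hinf_mem
    obtain ⟨H, hcard, hcl⟩ := hinf_mem
    rw [Finset.card_eq_zero.mp hcard] at hcl
    simp only [Finset.coe_empty, Subgroup.closure_empty] at hcl
    have : s ∈ (⊥ : Subgroup G) := by rw [hcl]; trivial
    exact hs_ne_one (Subgroup.mem_bot.mp this)
  have hne1 : sInf S ≠ 1 := by
    intro hcon
    rw [hcon] at hinf_mem
    obtain ⟨H, hcard, hcl⟩ := hinf_mem
    obtain ⟨g, rfl⟩ := Finset.card_eq_one.mp hcard
    simp only [Finset.coe_singleton] at hcl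
    have hsmem : s ∈ Subgroup.closure ({g} : Set G) := by rw [hcl]; trivial
    have htmem : t ∈ Subgroup.closure ({g} : Set G) := by rw [hcl]; trivial
    obtain ⟨a, ha⟩ := Subgroup.mem_closure_singleton.mp hsmem
    obtain ⟨b, hb⟩ := Subgroup.mem_closure_singleton.mp htmem
    apply hcomm
    rw [← ha, ← hb, ← zpow_add, ← zpow_add, add_comm a b]
  show sInf S = 2
  omega
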